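/- The real number 1/64 − (1/8)·Σ_{k=1}^∞ 2^{−(k²+4k+6)} is irrational. -/

import Mathlib

private def fexp (k : ℕ) : ℕ := (k + 1) ^ 2 + 4 * (k + 1) + 6

private lemma fexp_mono : Monotone fexp := by
  intro a b h
  unfold fexp
  nlinarith [h]

private lemma fexp_ge (k : ℕ) : k ≤ fexp k := by
  unfold fexp; nlinarith

private lemma fexp_gap (n k : ℕ) : fexp n + (2 * n + 7) + k ≤ fexp (k + (n + 1)) := by
  unfold fexp; nlinarith

private lemma summable_f : Summable (fun k : ℕ => (1 : ℝ) / 2 ^ fexp k) := by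
  refine Summable.of_nonneg_of_le (f := fun k : ℕ => (1 / 2 : ℝ) ^ k)
    (fun k => by positivity) (fun k => ?_)
    (summable_geometric_of_lt_one (r := (1/2:ℝ)) (by norm_num) (by norm_num))
  simp only [div_pow, one_pow]
  exact one_div_le_one_div_of_le (by positivity)
    (pow_le_pow_right₀ (by norm_num) (fexp_ge k))

set_option maxHeartbeats 1000000 in
private lemma irr_S : Irrational (∑' k : ℕ, (1 : ℝ) / 2 ^ fexp k) := by
  rintro ⟨q, hq⟩
  set S : ℝ := ∑' k : ℕ, (1 : ℝ) / 2 ^ fexp k with hS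
  set n : ℕ := q.den with hn
  have hden : 0 < q.den := q.den_pos
  -- split the sum
  have hsplit := (Summable.sum_add_tsum_nat_add (f := fun k : ℕ => (1 : ℝ) / 2 ^ fexp k)
    (n + 1) summable_f)
  set P : ℝ := ∑ i ∈ Finset.range (n + 1), (1 : ℝ) / 2 ^ fexp i with hP
  set T : ℝ := ∑' k : ℕ, (1 : ℝ) / 2 ^ fexp (k + (n + 1)) with hT
  have hST : P + T = S := hsplit
  -- tail positivity
  have hTsum : Summable (fun k : ℕ => (1 : ℝ) / 2 ^ fexp (k + (n + 1))) :=
    (summable_nat_add_iff (n + 1)).mpr summable_f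
  have hTpos : 0 < T := by
    rw [hT]
    refine Summable.tsum_pos hTsum (fun k => by positivity) 0 (by positivity)
  -- tail bound
  have hTle : T ≤ (1 / 2 : ℝ) ^ (fexp n + 2 * n + 6) := by
    have hgsum : Summable (fun k : ℕ => (1 / 2 : ℝ) ^ (fexp n + (2 * n + 7) + k)) :=
      (Summable.mul_left _ (summable_geometric_of_lt_one (r := (1/2:ℝ)) (by norm_num)
        (by norm_num))).congr (fun k => by rw [pow_add])
    have hb : T ≤ ∑' k : ℕ, (1 / 2 : ℝ) ^ (fexp n + (2 * n + 7) + k) := by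
      refine Summable.tsum_le_tsum (fun k => ?_) hTsum hgsum
      rw [div_pow, one_pow]
      exact one_div_le_one_div_of_le (by positivity)
        (pow_le_pow_right₀ (by norm_num) (fexp_gap n k))
    calc T ≤ ∑' k : ℕ, (1 / 2 : ℝ) ^ (fexp n + (2 * n + 7) + k) := hb
      _ = (1/2:ℝ) ^ (fexp n + (2*n+7)) * ∑' k : ℕ, (1/2:ℝ) ^ k := by
          rw [← tsum_mul_left]; congr 1; funext k; rw [pow_add]
      _ = (1/2:ℝ) ^ (fexp n + 2*n + 6) := by
          rw [tsum_geometric_of_lt_one (by norm_num) (by norm_num)]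
          rw [show fexp n + (2*n+7) = (fexp n + 2*n+6) + 1 by ring, pow_succ, mul_assoc]
          norm_num
  -- integer N with 2^(fexp n) * P = N
  set N : ℕ := ∑ i ∈ Finset.range (n + 1), 2 ^ (fexp n - fexp i) with hNdef
  have hPN : (2:ℝ) ^ fexp n * P = (N : ℝ) := by
    rw [hP, Finset.mul_sum, hNdef, Nat.cast_sum]
    apply Finset.sum_congr rfl
    intro i hi
    have hle : fexp i ≤ fexp n := fexp_mono (by simpa using Nat.lt_succ_iff.mp (Finset.mem_range.mp hi))
    rw [mul_one_div, Nat.cast_pow, Nat.cast_ofNat]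
    exact (pow_sub₀ (2:ℝ) (by norm_num) hle).symm
  -- the key integer
  set Z : ℤ := q.num * 2 ^ fexp n - (q.den : ℤ) * N with hZdef
  have hZ : (Z : ℝ) = (q.den : ℝ) * (2 ^ fexp n * T) := by
    have hqd : (q.den : ℝ) * (q : ℝ) = (q.num : ℝ) := by
      rw [Rat.cast_def, mul_div_cancel₀]
      exact Nat.cast_ne_zero.mpr hden.ne'
    have hTval : T = S - P := by linarith [hST]
    rw [hZdef, hTval, ← hq]
    push_cast
    rw [mul_sub, mul_sub]
    rw [show (q.den:ℝ) * (2 ^ fexp n * (q:ℝ)) = 2 ^ fexp n * ((q.den:ℝ) * (q:ℝ)) by ring, hqd]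
    rw [show (q.den:ℝ) * (2 ^ fexp n * P) = (q.den:ℝ) * ((2:ℝ) ^ fexp n * P) by ring, hPN]
    ring
  have hZpos : (0:ℝ) < Z := by
    rw [hZ]
    exact mul_pos (Nat.cast_pos.mpr hden) (mul_pos (by positivity) hTpos)
  have hZlt : (Z:ℝ) < 1 := by
    rw [hZ]
    have h1 : (2:ℝ) ^ fexp n * T ≤ 2 ^ fexp n * (1/2:ℝ) ^ (fexp n + 2*n + 6) :=
      mul_le_mul_of_nonneg_left hTle (by positivity)
    have h2 : (2:ℝ) ^ fexp n * (1/2:ℝ) ^ (fexp n + 2*n + 6) = (1/2:ℝ) ^ (2*n + 6) := by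
      rw [show fexp n + 2*n+6 = fexp n + (2*n+6) by ring, pow_add, div_pow, one_pow]
      field_simp
    have h3 : (q.den : ℝ) < 2 ^ (2*n + 6) := by
      have : q.den < 2 ^ (2*n+6) := lt_of_lt_of_le (Nat.lt_two_pow_self (n := q.den))
        (Nat.pow_le_pow_right (by norm_num) (by omega))
      exact_mod_cast this
    calc (q.den:ℝ) * (2 ^ fexp n * T) ≤ (q.den:ℝ) * (1/2:ℝ)^(2*n+6) := by
          rw [← h2]; exact mul_le_mul_of_nonneg_left h1 (by positivity)
      _ < 2^(2*n+6) * (1/2:ℝ)^(2*n+6) := by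
          apply mul_lt_mul_of_pos_right h3 (by positivity)
      _ = 1 := by rw [div_pow, one_pow, mul_one_div, div_self (by positivity)]
  have : (0:ℤ) < Z := by exact_mod_cast hZpos
  have : (1:ℤ) ≤ Z := this
  have : (1:ℝ) ≤ (Z:ℝ) := by exact_mod_cast this
  linarith

/-- The real number `1/64 − (1/8)·Σ_{k=1}^∞ 2^{−(k²+4k+6)}` is irrational.
(The sum over `k ≥ 1` is written as a `tsum` over `ℕ` via the shift `k ↦ k+1`.) -/
theorem statement3 :
    Irrational (1 / 64 - (1 / 8) * ∑' k : ℕ, (1 : ℝ) / 2 ^ ((k + 1) ^ 2 + 4 * (k + 1) + 6)) := by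
  have h := (irr_S.ratCast_mul (q := 1/8) (by norm_num)).ratCast_sub (q := 1/64)
  unfold fexp at h
  convert h using 2 <;> norm_num
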